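/- Under the base setup with estimated nuisances, if Q̄ = Q₀ a.s. and Q̄ᵥ = Q₀ᵥ a.s., then for every choice of 𝒢₀-measurable ḡ with δ ≤ ḡ ≤ 1 and 𝒢₁-measurable Ḡ with δ ≤ Ḡ ≤ 1, one has Ψ̄ + E[(1{A ≥ v}·Δ/(ḡ·Ḡ))·(Y − Q̄)] + E[(1{A ≥ v}/ḡ)·(Q̄ − Q̄ᵥ)] = Ψ₀; i.e., the true threshold-response is recovered when the outcome-regression nuisances are correctly specified (double robustness, second case of Theorem 2). -/

import Mathlib

open MeasureTheory ProbabilityTheory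

/-- double robustness, second case: if `Q̄ = Q₀` a.s. and `Q̄ᵥ = Q₀ᵥ` a.s.,
then the one-step/targeted population value recovers `Ψ₀` for every `ḡ`, `Ḡ`. -/
theorem stmt11
    {Ω 𝒲 : Type*} [mΩ : MeasurableSpace Ω] [MeasurableSpace 𝒲]
    (μ : Measure Ω) [IsProbabilityMeasure μ]
    (W : Ω → 𝒲) (A Δ Y : Ω → ℝ)
    (hWmeas : Measurable W) (hAmeas : Measurable A)
    (hΔmeas : Measurable Δ) (hYmeas : Measurable Y)
    (hΔ01 : ∀ ω, Δ ω = 0 ∨ Δ ω = 1) (hY01 : ∀ ω, Y ω ∈ Set.Icc (0 : ℝ) 1)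
    (v δ : ℝ) (hδ0 : 0 < δ) (hδ1 : δ < 1)
    (m0 m1 m2 : MeasurableSpace Ω)
    (hm0 : m0 = MeasurableSpace.comap W inferInstance)
    (hm1 : m1 = MeasurableSpace.comap (fun ω => (A ω, W ω)) inferInstance)
    (hm2 : m2 = MeasurableSpace.comap (fun ω => (A ω, W ω, Δ ω)) inferInstance)
    (G₀ g₀ Q₀ Q₀ᵥ : Ω → ℝ) (Ψ₀ : ℝ)
    (hG₀ : G₀ = μ[Δ | m1])
    (hg₀ : g₀ = μ[fun ω => if v ≤ A ω then (1 : ℝ) else 0 | m0])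
    (hQ₀ : Q₀ = fun ω => ((μ[fun ω' => Y ω' * Δ ω' | m1]) ω) / G₀ ω)
    (hQ₀ᵥ : Q₀ᵥ = fun ω =>
      ((μ[fun ω' => Q₀ ω' * (if v ≤ A ω' then (1 : ℝ) else 0) | m0]) ω) / g₀ ω)
    (hΨ₀ : Ψ₀ = ∫ ω, Q₀ᵥ ω ∂μ)
    (hG₀pos : ∀ᵐ ω ∂μ, δ ≤ G₀ ω)
    (hg₀pos : ∀ᵐ ω ∂μ, δ ≤ g₀ ω)
    (Gbar gbar Qbar Qbarv : Ω → ℝ)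
    (hGbarMeas : Measurable[m1] Gbar) (hgbarMeas : Measurable[m0] gbar)
    (hQbarMeas : Measurable[m1] Qbar) (hQbarvMeas : Measurable[m0] Qbarv)
    (hGbarB : ∀ ω, Gbar ω ∈ Set.Icc δ 1) (hgbarB : ∀ ω, gbar ω ∈ Set.Icc δ 1)
    (hQbarB : ∀ ω, Qbar ω ∈ Set.Icc (0 : ℝ) 1) (hQbarvB : ∀ ω, Qbarv ω ∈ Set.Icc (0 : ℝ) 1)
    (Psibar : ℝ) (hPsibar : Psibar = ∫ ω, Qbarv ω ∂μ)
    (hQbarEq : Qbar =ᵐ[μ] Q₀) (hQbarvEq : Qbarv =ᵐ[μ] Q₀ᵥ) :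
    Psibar
      + ∫ ω, ((if v ≤ A ω then (1 : ℝ) else 0) * Δ ω / (gbar ω * Gbar ω)) * (Y ω - Qbar ω) ∂μ
      + ∫ ω, ((if v ≤ A ω then (1 : ℝ) else 0) / gbar ω) * (Qbar ω - Qbarv ω) ∂μ
      = Ψ₀ := by
  classical
  set χ : Ω → ℝ := fun ω => if v ≤ A ω then (1 : ℝ) else 0 with hχ
  -- sub-σ-algebra facts
  have hm0le : m0 ≤ mΩ := by rw [hm0]; exact hWmeas.comap_le
  have hm1le : m1 ≤ mΩ := by rw [hm1]; exact (hAmeas.prodMk hWmeas).comap_le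
  have hpair : Measurable[m1] (fun ω => (A ω, W ω)) := by
    rw [hm1]; exact measurable_iff_comap_le.mpr le_rfl
  have hA1 : Measurable[m1] A := measurable_fst.comp hpair
  have hW1 : Measurable[m1] W := measurable_snd.comp hpair
  have hm01 : m0 ≤ m1 := by rw [hm0]; exact hW1.comap_le
  have hχ1 : Measurable[m1] χ := by
    refine Measurable.ite ?_ measurable_const measurable_const
    exact measurableSet_le measurable_const hA1
  have hχB : ∀ ω, |χ ω| ≤ 1 := by
    intro ω; simp only [hχ]; split <;> simp
  have hχmeas : Measurable[mΩ] χ := hχ1.mono hm1le le_rfl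
  have hΔB : ∀ ω, |Δ ω| ≤ 1 := by
    intro ω; rcases hΔ01 ω with h | h <;> simp [h]
  have hYB : ∀ ω, |Y ω| ≤ 1 := fun ω =>
    abs_le.2 ⟨by linarith [(hY01 ω).1], (hY01 ω).2⟩
  have hQbarB' : ∀ ω, |Qbar ω| ≤ 1 := fun ω =>
    abs_le.2 ⟨by linarith [(hQbarB ω).1], (hQbarB ω).2⟩
  have hQbarvB' : ∀ ω, |Qbarv ω| ≤ 1 := fun ω =>
    abs_le.2 ⟨by linarith [(hQbarvB ω).1], (hQbarvB ω).2⟩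
  have hgbar_pos : ∀ ω, 0 < gbar ω := fun ω => lt_of_lt_of_le hδ0 (hgbarB ω).1
  have hGbar_pos : ∀ ω, 0 < Gbar ω := fun ω => lt_of_lt_of_le hδ0 (hGbarB ω).1
  -- integrability helper
  have intOf : ∀ (f : Ω → ℝ) (C : ℝ), Measurable[mΩ] f → (∀ ω, |f ω| ≤ C) → Integrable f μ := by
    intro f C hf hC
    exact Integrable.mono' (integrable_const C) hf.aestronglyMeasurable (μ := μ)
      (Filter.Eventually.of_forall fun ω => hC ω)
  have hQbarm : Measurable[mΩ] Qbar := hQbarMeas.mono hm1le le_rfl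
  have hQbarvm : Measurable[mΩ] Qbarv := hQbarvMeas.mono hm0le le_rfl
  have hgbarm : Measurable[mΩ] gbar := hgbarMeas.mono hm0le le_rfl
  have hGbarm : Measurable[mΩ] Gbar := hGbarMeas.mono hm1le le_rfl
  ------------------------------------------------------------------
  -- First correction term is zero
  ------------------------------------------------------------------
  have hfirst :
      (∫ ω, (χ ω * Δ ω / (gbar ω * Gbar ω)) * (Y ω - Qbar ω) ∂μ) = 0 := by
    set f1 : Ω → ℝ := fun ω => χ ω / (gbar ω * Gbar ω) with hf1
    set h1 : Ω → ℝ := fun ω => Δ ω * (Y ω - Qbar ω) with hh1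
    have hf1meas1 : Measurable[m1] f1 :=
      hχ1.div ((hgbarMeas.mono hm01 le_rfl).mul hGbarMeas)
    have hf1meas : Measurable[mΩ] f1 := hf1meas1.mono hm1le le_rfl
    have hf1B : ∀ ω, |f1 ω| ≤ 1 / (δ * δ) := by
      intro ω
      have hd : δ * δ ≤ gbar ω * Gbar ω :=
        mul_le_mul (hgbarB ω).1 (hGbarB ω).1 hδ0.le (hgbar_pos ω).le
      have hdpos : 0 < gbar ω * Gbar ω := mul_pos (hgbar_pos ω) (hGbar_pos ω)
      rw [hf1, abs_div, abs_of_pos hdpos]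
      apply div_le_div₀ (by positivity) (hχB ω) (by positivity) hd
    have hh1meas : Measurable[mΩ] h1 := hΔmeas.mul (hYmeas.sub hQbarm)
    have hh1B : ∀ ω, |h1 ω| ≤ 2 := by
      intro ω
      have : |Y ω - Qbar ω| ≤ 2 := by
        have := hYB ω; have := hQbarB' ω
        rw [abs_le] at *; constructor <;> [linarith [this.1]; linarith [this.2]]
      calc |h1 ω| = |Δ ω| * |Y ω - Qbar ω| := abs_mul _ _
        _ ≤ 1 * 2 := mul_le_mul (hΔB ω) this (abs_nonneg _) one_pos.le
        _ = 2 := by norm_num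
    have hh1int : Integrable h1 μ := intOf h1 2 hh1meas hh1B
    have hfh1int : Integrable (f1 * h1) μ := by
      refine intOf _ ((1 / (δ * δ)) * 2) (hf1meas.mul hh1meas) ?_
      intro ω
      calc |(f1 * h1) ω| = |f1 ω| * |h1 ω| := abs_mul _ _
        _ ≤ (1 / (δ * δ)) * 2 :=
            mul_le_mul (hf1B ω) (hh1B ω) (abs_nonneg _) (by positivity)
    -- conditional expectation of h1 given m1 is 0 a.e.
    have hcondh1 : μ[h1 | m1] =ᵐ[μ] 0 := by
      have hYΔint : Integrable (fun ω => Y ω * Δ ω) μ := by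
        refine intOf _ 1 (hYmeas.mul hΔmeas) ?_
        intro ω
        calc |Y ω * Δ ω| = |Y ω| * |Δ ω| := abs_mul _ _
          _ ≤ 1 * 1 := mul_le_mul (hYB ω) (hΔB ω) (abs_nonneg _) one_pos.le
          _ = 1 := one_mul 1
      have hQΔint : Integrable (fun ω => Qbar ω * Δ ω) μ := by
        refine intOf _ 1 (hQbarm.mul hΔmeas) ?_
        intro ω
        calc |Qbar ω * Δ ω| = |Qbar ω| * |Δ ω| := abs_mul _ _
          _ ≤ 1 * 1 := mul_le_mul (hQbarB' ω) (hΔB ω) (abs_nonneg _) one_pos.le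
          _ = 1 := one_mul 1
      have hsplit : h1 = (fun ω => Y ω * Δ ω) - (fun ω => Qbar ω * Δ ω) := by
        funext ω; simp only [hh1, Pi.sub_apply]; ring
      have hΔint : Integrable Δ μ := intOf Δ 1 hΔmeas hΔB
      have hpull : μ[fun ω => Qbar ω * Δ ω | m1] =ᵐ[μ] fun ω => Qbar ω * G₀ ω := by
        have := condExp_mul_of_stronglyMeasurable_left (μ := μ)
          hQbarMeas.stronglyMeasurable hQΔint hΔint
        refine this.trans ?_
        rw [hG₀]
        exact Filter.EventuallyEq.rfl
      have hQG : (fun ω => Qbar ω * G₀ ω) =ᵐ[μ] μ[fun ω => Y ω * Δ ω | m1] := by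
        filter_upwards [hQbarEq, hG₀pos] with ω hQ hG
        have hGne : G₀ ω ≠ 0 := by linarith
        rw [hQ, hQ₀]
        field_simp
      calc μ[h1 | m1]
          =ᵐ[μ] μ[fun ω => Y ω * Δ ω | m1] - μ[fun ω => Qbar ω * Δ ω | m1] := by
            rw [hsplit]; exact condExp_sub hYΔint hQΔint _
        _ =ᵐ[μ] 0 := by
            filter_upwards [hpull, hQG] with ω h1' h2'
            simp only [Pi.sub_apply, Pi.zero_apply, h1', ← h2']
            ring
    have key : (∫ ω, f1 ω * h1 ω ∂μ) = 0 := by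
      have h1' : (∫ ω, f1 ω * h1 ω ∂μ) = ∫ ω, (μ[f1 * h1 | m1]) ω ∂μ :=
        (integral_condExp hm1le).symm
      have h2' : μ[f1 * h1 | m1] =ᵐ[μ] f1 * μ[h1 | m1] :=
        condExp_mul_of_stronglyMeasurable_left hf1meas1.stronglyMeasurable hfh1int hh1int
      have h3' : (f1 * μ[h1 | m1] : Ω → ℝ) =ᵐ[μ] 0 := by
        filter_upwards [hcondh1] with ω hz
        simp [hz]
      rw [h1', integral_congr_ae (h2'.trans h3')]
      simp
    calc (∫ ω, (χ ω * Δ ω / (gbar ω * Gbar ω)) * (Y ω - Qbar ω) ∂μ)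
        = ∫ ω, f1 ω * h1 ω ∂μ := by
          apply integral_congr_ae
          apply Filter.Eventually.of_forall
          intro ω; simp only [hf1, hh1]; ring
      _ = 0 := key
  ------------------------------------------------------------------
  -- Second correction term is zero
  ------------------------------------------------------------------
  have hsecond :
      (∫ ω, (χ ω / gbar ω) * (Qbar ω - Qbarv ω) ∂μ) = 0 := by
    set f2 : Ω → ℝ := fun ω => 1 / gbar ω with hf2
    set h2 : Ω → ℝ := fun ω => χ ω * (Qbar ω - Qbarv ω) with hh2
    have hf2meas0 : Measurable[m0] f2 := measurable_const.div hgbarMeas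
    have hf2meas : Measurable[mΩ] f2 := hf2meas0.mono hm0le le_rfl
    have hf2B : ∀ ω, |f2 ω| ≤ 1 / δ := by
      intro ω
      rw [hf2, abs_div, abs_of_pos (hgbar_pos ω), abs_one]
      exact div_le_div₀ one_pos.le le_rfl hδ0 (hgbarB ω).1
    have hh2meas : Measurable[mΩ] h2 := hχmeas.mul (hQbarm.sub hQbarvm)
    have hh2B : ∀ ω, |h2 ω| ≤ 2 := by
      intro ω
      have : |Qbar ω - Qbarv ω| ≤ 2 := by
        have := hQbarB' ω; have := hQbarvB' ω
        rw [abs_le] at *; constructor <;> [linarith [this.1]; linarith [this.2]]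
      calc |h2 ω| = |χ ω| * |Qbar ω - Qbarv ω| := abs_mul _ _
        _ ≤ 1 * 2 := mul_le_mul (hχB ω) this (abs_nonneg _) one_pos.le
        _ = 2 := by norm_num
    have hh2int : Integrable h2 μ := intOf h2 2 hh2meas hh2B
    have hfh2int : Integrable (f2 * h2) μ := by
      refine intOf _ ((1 / δ) * 2) (hf2meas.mul hh2meas) ?_
      intro ω
      calc |(f2 * h2) ω| = |f2 ω| * |h2 ω| := abs_mul _ _
        _ ≤ (1 / δ) * 2 :=
            mul_le_mul (hf2B ω) (hh2B ω) (abs_nonneg _) (by positivity)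
    have hcondh2 : μ[h2 | m0] =ᵐ[μ] 0 := by
      have hQχint : Integrable (fun ω => Qbar ω * χ ω) μ := by
        refine intOf _ 1 (hQbarm.mul hχmeas) ?_
        intro ω
        calc |Qbar ω * χ ω| = |Qbar ω| * |χ ω| := abs_mul _ _
          _ ≤ 1 * 1 := mul_le_mul (hQbarB' ω) (hχB ω) (abs_nonneg _) one_pos.le
          _ = 1 := one_mul 1
      have hQvχint : Integrable (fun ω => Qbarv ω * χ ω) μ := by
        refine intOf _ 1 (hQbarvm.mul hχmeas) ?_
        intro ω
        calc |Qbarv ω * χ ω| = |Qbarv ω| * |χ ω| := abs_mul _ _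
          _ ≤ 1 * 1 := mul_le_mul (hQbarvB' ω) (hχB ω) (abs_nonneg _) one_pos.le
          _ = 1 := one_mul 1
      have hχint : Integrable χ μ := intOf χ 1 hχmeas hχB
      have hsplit : h2 = (fun ω => Qbar ω * χ ω) - (fun ω => Qbarv ω * χ ω) := by
        funext ω; simp only [hh2, Pi.sub_apply]; ring
      -- pull out Qbarv
      have hpull : μ[fun ω => Qbarv ω * χ ω | m0] =ᵐ[μ] fun ω => Qbarv ω * g₀ ω := by
        have := condExp_mul_of_stronglyMeasurable_left (μ := μ)
          hQbarvMeas.stronglyMeasurable hQvχint hχint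
        refine this.trans ?_
        rw [hg₀]
        exact Filter.EventuallyEq.rfl
      -- Qbar * χ has same condexp as Q₀ * χ
      have hcongr : μ[fun ω => Qbar ω * χ ω | m0]
          =ᵐ[μ] μ[fun ω => Q₀ ω * χ ω | m0] := by
        apply condExp_congr_ae
        filter_upwards [hQbarEq] with ω hQ
        rw [hQ]
      have hQv : (fun ω => Qbarv ω * g₀ ω) =ᵐ[μ] μ[fun ω => Q₀ ω * χ ω | m0] := by
        filter_upwards [hQbarvEq, hg₀pos] with ω hQv hg
        have hgne : g₀ ω ≠ 0 := by linarith
        rw [hQv, hQ₀ᵥ]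
        simp only [hχ]
        field_simp
      calc μ[h2 | m0]
          =ᵐ[μ] μ[fun ω => Qbar ω * χ ω | m0] - μ[fun ω => Qbarv ω * χ ω | m0] := by
            rw [hsplit]; exact condExp_sub hQχint hQvχint _
        _ =ᵐ[μ] 0 := by
            filter_upwards [hpull, hcongr, hQv] with ω hp hc hq
            simp only [Pi.sub_apply, Pi.zero_apply, hp, hc, ← hq]
            ring
    have key : (∫ ω, f2 ω * h2 ω ∂μ) = 0 := by
      have h1' : (∫ ω, f2 ω * h2 ω ∂μ) = ∫ ω, (μ[f2 * h2 | m0]) ω ∂μ :=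
        (integral_condExp hm0le).symm
      have h2' : μ[f2 * h2 | m0] =ᵐ[μ] f2 * μ[h2 | m0] :=
        condExp_mul_of_stronglyMeasurable_left hf2meas0.stronglyMeasurable hfh2int hh2int
      have h3' : (f2 * μ[h2 | m0] : Ω → ℝ) =ᵐ[μ] 0 := by
        filter_upwards [hcondh2] with ω hz
        simp [hz]
      rw [h1', integral_congr_ae (h2'.trans h3')]
      simp
    calc (∫ ω, (χ ω / gbar ω) * (Qbar ω - Qbarv ω) ∂μ)
        = ∫ ω, f2 ω * h2 ω ∂μ := by
          apply integral_congr_ae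
          apply Filter.Eventually.of_forall
          intro ω; simp only [hf2, hh2]; ring
      _ = 0 := key
  have hPsi : Psibar = Ψ₀ := by
    rw [hPsibar, hΨ₀]
    exact integral_congr_ae hQbarvEq
  rw [hfirst, hsecond, hPsi]
  ring
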